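/- Let p ≥ 1 and let x_e (e ≥ 0) be defined by x_0 = 1, x_e = 2(p+e)(2p+1)⋯(2p+e-1)/e! for e ≥ 1, and let l_j = binom(2p+1,j). Then for every h with p+1 ≤ h ≤ 2p, ∑_{i=0}^{h-p} (-1)^i (l_0 + l_1 + ⋯ + l_i) x_{h-i-p} = 0. -/

import Mathlib

open PowerSeries Finset

private lemma coeff_one_sub_X_pow (n k : ℕ) :
    PowerSeries.coeff (R := ℚ) k ((1 - PowerSeries.X) ^ n) = (-1) ^ k * (n.choose k : ℚ) := by
  rw [sub_pow, map_sum]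
  have hterm : ∀ m ∈ Finset.range (n + 1),
      PowerSeries.coeff (R := ℚ) k
        ((-1 : ℚ⟦X⟧) ^ (m + n) * 1 ^ m * PowerSeries.X ^ (n - m) * ((n.choose m : ℕ) : ℚ⟦X⟧))
      = if k = n - m then (-1 : ℚ) ^ (m + n) * (n.choose m : ℚ) else 0 := by
    intro m _
    have : ((-1 : ℚ⟦X⟧) ^ (m + n) * 1 ^ m * PowerSeries.X ^ (n - m) * ((n.choose m : ℕ) : ℚ⟦X⟧))
        = PowerSeries.C (R := ℚ) ((-1 : ℚ) ^ (m + n) * (n.choose m : ℚ)) * PowerSeries.X ^ (n - m) := by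
      have hc : ((n.choose m : ℕ) : ℚ⟦X⟧) = PowerSeries.C (R := ℚ) ((n.choose m : ℕ) : ℚ) := by
        simp
      rw [hc, map_mul, map_pow, map_neg, map_one]
      ring
    rw [this, PowerSeries.coeff_C_mul, PowerSeries.coeff_X_pow]
    split <;> simp
  rw [Finset.sum_congr rfl hterm]
  by_cases hk : k ≤ n
  · rw [Finset.sum_eq_single_of_mem (n - k) (by simp only [Finset.mem_range]; omega)]
    · have h1 : k = n - (n - k) := by omega
      rw [if_pos h1, Nat.choose_symm hk]
      have hsgn : (-1 : ℚ) ^ (n - k + n) = (-1 : ℚ) ^ k := by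
        rw [show n - k + n = k + 2 * (n - k) by omega, pow_add, pow_mul]
        simp
      rw [hsgn]
    · intro b hb hbne
      simp only [Finset.mem_range] at hb
      rw [if_neg (by omega)]
  · rw [Finset.sum_eq_zero, Nat.choose_eq_zero_of_lt (by omega)]
    · simp
    · intro b hb
      simp only [Finset.mem_range] at hb
      rw [if_neg (by omega)]

private lemma one_add_X_mul_alt (d : ℕ) :
    ((1 : ℚ⟦X⟧) + PowerSeries.X) *
      PowerSeries.mk (fun i => (-1 : ℚ) ^ i * ∑ j ∈ Finset.range (i + 1), ((d + 1).choose j : ℚ))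
      = (1 - PowerSeries.X) ^ (d + 1) := by
  ext k
  rw [add_mul, one_mul, map_add, coeff_one_sub_X_pow]
  cases k with
  | zero => simp
  | succ n =>
    rw [PowerSeries.coeff_succ_X_mul, PowerSeries.coeff_mk, PowerSeries.coeff_mk,
      Finset.sum_range_succ (fun j => (((d + 1).choose j : ℕ) : ℚ)) (n + 1)]
    ring

theorem stmt6 (p : ℕ) (hp : 1 ≤ p)
    (x : ℕ → ℚ) (hx0 : x 0 = 1)
    (hx : ∀ e, 1 ≤ e → x e =
      2 * (p + e) * (∏ k ∈ Finset.Icc 1 (e - 1), ((2 * p + k : ℕ) : ℚ)) /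
        (Nat.factorial e))
    (h : ℕ) (h1 : p + 1 ≤ h) (h2 : h ≤ 2 * p) :
    ∑ i ∈ Finset.range (h - p + 1),
      (-1 : ℚ) ^ i * (∑ j ∈ Finset.range (i + 1), (Nat.choose (2 * p + 1) j : ℚ)) *
        x (h - i - p) = 0 := by
  -- factorial/product identity
  have hprod : ∀ e : ℕ, (((2 * p).factorial : ℚ)) * ∏ k ∈ Finset.Icc 1 e, ((2 * p + k : ℕ) : ℚ)
      = ((2 * p + e).factorial : ℚ) := by
    intro e
    induction e with
    | zero => simp
    | succ n ih =>
      rw [Finset.prod_Icc_succ_top (Nat.le_add_left 1 n), ← mul_assoc, ih,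
        show 2 * p + (n + 1) = (2 * p + n) + 1 by ring, Nat.factorial_succ]
      push_cast
      ring
  -- closed form for x
  have hxval : ∀ f : ℕ, x (f + 1) =
      ((2 * p + f + 1).choose (f + 1) : ℚ) + ((2 * p + f).choose f : ℚ) := by
    intro f
    rw [hx (f + 1) (by omega)]
    have e1 : ((2 * p + f + 1).choose (f + 1) : ℚ)
        = ((2 * p + f + 1).factorial : ℚ) / ((f + 1).factorial * (2 * p).factorial) := by
      rw [Nat.cast_choose ℚ (by omega), show 2 * p + f + 1 - (f + 1) = 2 * p by omega]
    have e2 : ((2 * p + f).choose f : ℚ)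
        = ((2 * p + f).factorial : ℚ) / (f.factorial * (2 * p).factorial) := by
      rw [Nat.cast_choose ℚ (by omega), show 2 * p + f - f = 2 * p by omega]
    have hpr := hprod f
    have hf1 : ((f + 1).factorial : ℚ) = (f + 1) * f.factorial := by
      rw [Nat.factorial_succ]; push_cast; ring
    have hf2 : ((2 * p + f + 1).factorial : ℚ) = (2 * p + f + 1) * (2 * p + f).factorial := by
      rw [show 2 * p + f + 1 = (2 * p + f) + 1 from rfl, Nat.factorial_succ]; push_cast; ring
    have h0 : ((2 * p).factorial : ℚ) ≠ 0 := Nat.cast_ne_zero.2 (Nat.factorial_ne_zero _)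
    have h1' : (f.factorial : ℚ) ≠ 0 := Nat.cast_ne_zero.2 (Nat.factorial_ne_zero _)
    have h2' : ((f : ℚ) + 1) ≠ 0 := by positivity
    have hprneq : (∏ k ∈ Finset.Icc 1 f, ((2 * p + k : ℕ) : ℚ))
        = ((2 * p + f).factorial : ℚ) / ((2 * p).factorial : ℚ) := by
      rw [eq_div_iff h0, mul_comm]
      exact hpr
    rw [e1, e2, hf1, hf2, show (f + 1) - 1 = f from rfl, hprneq]
    field_simp
    push_cast
    ring
  -- power series setup
  have hGfac : PowerSeries.mk x
      = ((1 : ℚ⟦X⟧) + PowerSeries.X) * (invOneSubPow ℚ (2 * p + 1)).val := by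
    rw [invOneSubPow_val_succ_eq_mk_add_choose]
    ext k
    rw [PowerSeries.coeff_mk, add_mul, one_mul, map_add]
    cases k with
    | zero => simpa using hx0
    | succ n =>
      rw [PowerSeries.coeff_succ_X_mul, PowerSeries.coeff_mk, PowerSeries.coeff_mk, hxval n]
      have c1 : (2 * p + (n + 1)).choose (2 * p) = (2 * p + n + 1).choose (n + 1) := by
        rw [Nat.choose_symm_add]
        congr 1
      have c2 : (2 * p + n).choose (2 * p) = (2 * p + n).choose n := Nat.choose_symm_add
      rw [c1, c2]
  have hkey : ((1 : ℚ⟦X⟧) + PowerSeries.X) *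
      PowerSeries.mk (fun i => (-1 : ℚ) ^ i * ∑ j ∈ Finset.range (i + 1),
        ((2 * p + 1).choose j : ℚ)) = (1 - PowerSeries.X) ^ (2 * p + 1) :=
    one_add_X_mul_alt (2 * p)
  have hFG : PowerSeries.mk (fun i => (-1 : ℚ) ^ i * ∑ j ∈ Finset.range (i + 1),
      ((2 * p + 1).choose j : ℚ)) * PowerSeries.mk x = 1 := by
    calc PowerSeries.mk (fun i => (-1 : ℚ) ^ i * ∑ j ∈ Finset.range (i + 1),
          ((2 * p + 1).choose j : ℚ)) * PowerSeries.mk x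
        = (((1 : ℚ⟦X⟧) + PowerSeries.X) *
            PowerSeries.mk (fun i => (-1 : ℚ) ^ i * ∑ j ∈ Finset.range (i + 1),
              ((2 * p + 1).choose j : ℚ))) * (invOneSubPow ℚ (2 * p + 1)).val := by
          rw [hGfac]; ring
      _ = (1 - PowerSeries.X) ^ (2 * p + 1) * (invOneSubPow ℚ (2 * p + 1)).val := by rw [hkey]
      _ = 1 := by
          rw [← invOneSubPow_inv_eq_one_sub_pow]
          exact (invOneSubPow ℚ (2 * p + 1)).inv_val
  have hcoeff := congrArg (PowerSeries.coeff (R := ℚ) (h - p)) hFG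
  rw [PowerSeries.coeff_mul,
    Finset.Nat.sum_antidiagonal_eq_sum_range_succ
      (fun i j => PowerSeries.coeff (R := ℚ) i (PowerSeries.mk (fun i => (-1 : ℚ) ^ i *
        ∑ j ∈ Finset.range (i + 1), ((2 * p + 1).choose j : ℚ))) *
        PowerSeries.coeff (R := ℚ) j (PowerSeries.mk x)),
    PowerSeries.coeff_one, if_neg (by omega)] at hcoeff
  rw [← hcoeff]
  apply Finset.sum_congr rfl
  intro i hi
  rw [PowerSeries.coeff_mk, PowerSeries.coeff_mk, show h - p - i = h - i - p by omega]
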